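/- Let H be a π-torsion-free nilpotent group and let x, y ∈ H. If x^n · y^m = y^m · x^n for some π-numbers m and n, then x · y = y · x. -/

import Mathlib

def IsPiNumber (π : Set ℕ) (n : ℕ) : Prop :=
  0 < n ∧ ∀ p : ℕ, p.Prime → p ∣ n → p ∈ π

section Aux

variable {H : Type*} [Group H]

private lemma key_pow (j : ℕ) (x z : H) (n : ℕ)
    (hc : x * z * x⁻¹ * z⁻¹ ∈ upperCentralSeries H (j + 1)) :
    x ^ n * z * (x ^ n)⁻¹ * z⁻¹ * ((x * z * x⁻¹ * z⁻¹) ^ n)⁻¹ ∈ upperCentralSeries H j := by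
  induction n with
  | zero => simpa using (upperCentralSeries H j).one_mem
  | succ n ih =>
    have h1 : x * (x ^ n * z * (x ^ n)⁻¹ * z⁻¹ * ((x * z * x⁻¹ * z⁻¹) ^ n)⁻¹) * x⁻¹ ∈
        upperCentralSeries H j :=
      (inferInstance : (Subgroup.upperCentralSeries H j).Normal).conj_mem _ ih x
    have hcn : (x * z * x⁻¹ * z⁻¹) ^ n ∈ upperCentralSeries H (j + 1) := pow_mem hc n
    have h2 : (x * z * x⁻¹ * z⁻¹) ^ n * x * ((x * z * x⁻¹ * z⁻¹) ^ n)⁻¹ * x⁻¹ ∈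
        upperCentralSeries H j :=
      (mem_upperCentralSeries_succ_iff).mp hcn x
    have h2' : x * (x * z * x⁻¹ * z⁻¹) ^ n * x⁻¹ * (((x * z * x⁻¹ * z⁻¹) ^ n))⁻¹ ∈
        upperCentralSeries H j := by
      have h3 := inv_mem h2
      have heq : ((x * z * x⁻¹ * z⁻¹) ^ n * x * ((x * z * x⁻¹ * z⁻¹) ^ n)⁻¹ * x⁻¹)⁻¹ =
          x * (x * z * x⁻¹ * z⁻¹) ^ n * x⁻¹ * (((x * z * x⁻¹ * z⁻¹) ^ n))⁻¹ := by group
      rwa [heq] at h3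
    have h4 := mul_mem h1 h2'
    have heq2 : (x * (x ^ n * z * (x ^ n)⁻¹ * z⁻¹ * ((x * z * x⁻¹ * z⁻¹) ^ n)⁻¹) * x⁻¹) *
        (x * (x * z * x⁻¹ * z⁻¹) ^ n * x⁻¹ * (((x * z * x⁻¹ * z⁻¹) ^ n))⁻¹) =
        x ^ (n + 1) * z * (x ^ (n + 1))⁻¹ * z⁻¹ * ((x * z * x⁻¹ * z⁻¹) ^ (n + 1))⁻¹ := by
      rw [pow_succ, pow_succ]
      group
    rwa [heq2] at h4

/-- `Z (j+1) / Z j` is π-torsion-free. -/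
private lemma E_lemma (π : Set ℕ) (hTF : ∀ g : H, ∀ m : ℕ, IsPiNumber π m → g ^ m = 1 → g = 1)
    (k : ℕ) (hk : IsPiNumber π k) :
    ∀ j : ℕ, ∀ h : H, h ∈ upperCentralSeries H (j + 1) → h ^ k ∈ upperCentralSeries H j →
      h ∈ upperCentralSeries H j := by
  intro j
  induction j with
  | zero =>
    intro h _ hpk
    have : h ^ k = 1 := by simpa [upperCentralSeries, Subgroup.upperCentralSeries_zero] using hpk
    simpa [upperCentralSeries, Subgroup.upperCentralSeries_zero] using hTF h k hk this
  | succ j ih =>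
    intro h hh hpk
    rw [upperCentralSeries, Subgroup.mem_upperCentralSeries_succ_iff]
    intro y
    have hc : h * y * h⁻¹ * y⁻¹ ∈ upperCentralSeries H (j + 1) :=
      (mem_upperCentralSeries_succ_iff).mp hh y
    -- [h^k, y] ∈ Z j
    have hk2 : h ^ k * y * (h ^ k)⁻¹ * y⁻¹ ∈ upperCentralSeries H j :=
      (mem_upperCentralSeries_succ_iff).mp hpk y
    have hkey := key_pow j h y k hc
    -- so (h*y*h⁻¹*y⁻¹)^k ∈ Z j
    have hck : (h * y * h⁻¹ * y⁻¹) ^ k ∈ upperCentralSeries H j := by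
      have := mul_mem (inv_mem hkey) hk2
      have heq : (h ^ k * y * (h ^ k)⁻¹ * y⁻¹ * ((h * y * h⁻¹ * y⁻¹) ^ k)⁻¹)⁻¹ *
          (h ^ k * y * (h ^ k)⁻¹ * y⁻¹) = (h * y * h⁻¹ * y⁻¹) ^ k := by group
      rwa [heq] at this
    exact ih _ hc hck

/-- If `x^n` commutes with `z` then `x` commutes with `z`. -/
private lemma F_lemma (π : Set ℕ) (hTF : ∀ g : H, ∀ m : ℕ, IsPiNumber π m → g ^ m = 1 → g = 1)
    (n : ℕ) (hn : IsPiNumber π n) (x z : H) (hcomm : x ^ n * z = z * x ^ n)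
    (c : ℕ) (htop : upperCentralSeries H c = ⊤) : x * z = z * x := by
  have hxn : x ^ n * z * (x ^ n)⁻¹ * z⁻¹ = 1 := by
    rw [hcomm]; group
  have main : ∀ j : ℕ, x * z * x⁻¹ * z⁻¹ ∈ upperCentralSeries H j →
      x * z * x⁻¹ * z⁻¹ = 1 := by
    intro j
    induction j with
    | zero => intro hmem; simpa [upperCentralSeries, Subgroup.upperCentralSeries_zero] using hmem
    | succ j ih =>
      intro hmem
      have hkey := key_pow j x z n hmem
      rw [hxn] at hkey
      have hck : (x * z * x⁻¹ * z⁻¹) ^ n ∈ upperCentralSeries H j := by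
        have := inv_mem hkey
        simpa using this
      exact ih (E_lemma π hTF n hn j _ hmem hck)
  have hmemtop : x * z * x⁻¹ * z⁻¹ ∈ upperCentralSeries H c := by rw [htop]; trivial
  have h1 : x * z * x⁻¹ * z⁻¹ = 1 := main c hmemtop
  have : x * z = z * x := by
    have h2 : x * z = (x * z * x⁻¹ * z⁻¹) * (z * x) := by group
    rw [h1, one_mul] at h2
    exact h2
  exact this

end Aux

theorem commute_of_pi_powers_commute (H : Type*) [Group H] [Group.IsNilpotent H]
    (π : Set ℕ) (hTF : ∀ g : H, ∀ m : ℕ, IsPiNumber π m → g ^ m = 1 → g = 1)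
    (x y : H) (m n : ℕ) (hm : IsPiNumber π m) (hn : IsPiNumber π n)
    (hcomm : x ^ n * y ^ m = y ^ m * x ^ n) :
    x * y = y * x := by
  obtain ⟨c, htop⟩ := Group.IsNilpotent.nilpotent' (G := H)
  have h1 : x * y ^ m = y ^ m * x := F_lemma π hTF n hn x (y ^ m) hcomm c htop
  have h2 : y * x = x * y := F_lemma π hTF m hm y x h1.symm c htop
  exact h2.symm
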